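/- Let R be the non-unital commutative ℂ-algebra with basis {t^α : α ∈ ℝ, α > 0} and multiplication t^α · t^β = t^{α+β}. Then R is quasi-unital: the canonical map R ⊗_R R → R is an isomorphism. -/

import Mathlib

open TensorProduct LinearMap

/-- The additive semigroup of positive real exponents. -/
abbrev PosReal := {x : ℝ // 0 < x}

/-- `R = ℂ[t^α | 0 < α ∈ ℝ]`: the non-unital commutative ℂ-algebra with basis
`{t^α : α > 0}` and multiplication `t^α · t^β = t^{α+β}`. -/
abbrev Rpos := AddMonoidAlgebra ℂ PosReal

/-- The bar differential `R ⊗ R ⊗ R → R ⊗ R`. -/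
noncomputable def barD : (Rpos ⊗[ℂ] (Rpos ⊗[ℂ] Rpos)) →ₗ[ℂ] Rpos ⊗[ℂ] Rpos :=
  (rTensor Rpos (mul' ℂ Rpos)) ∘ₗ (TensorProduct.assoc ℂ Rpos Rpos Rpos).symm.toLinearMap
    - lTensor Rpos (mul' ℂ Rpos)

/-- Half of a positive real. -/
noncomputable def half (γ : PosReal) : PosReal := ⟨γ.1 / 2, div_pos γ.2 two_pos⟩

/-- The section `t^γ ↦ t^{γ/2} ⊗ t^{γ/2}` of the multiplication map. -/
noncomputable def sSec : Rpos →ₗ[ℂ] Rpos ⊗[ℂ] Rpos :=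
  (Finsupp.lsum ℂ fun γ => LinearMap.toSpanSingleton ℂ _
    (AddMonoidAlgebra.single (half γ) (1:ℂ) ⊗ₜ[ℂ] AddMonoidAlgebra.single (half γ) (1:ℂ)))
    ∘ₗ (AddMonoidAlgebra.coeffLinearEquiv ℂ).toLinearMap

lemma sSec_single (γ : PosReal) (c : ℂ) :
    sSec (AddMonoidAlgebra.single γ c) =
      c • (AddMonoidAlgebra.single (half γ) 1 ⊗ₜ[ℂ] AddMonoidAlgebra.single (half γ) 1) := by
  rw [sSec, LinearMap.comp_apply]; erw [Finsupp.lsum_single]; rw [toSpanSingleton_apply]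

lemma barD_tmul (a b c : Rpos) :
    barD (a ⊗ₜ (b ⊗ₜ c)) = (a * b) ⊗ₜ c - a ⊗ₜ (b * c) := by
  simp [barD, mul'_apply]

lemma coe_add' (a b : PosReal) : ((a + b : PosReal) : ℝ) = a.1 + b.1 := rfl

/-- `mul' ∘ sSec = id`. -/
lemma mul'_comp_sSec : mul' ℂ Rpos ∘ₗ sSec = LinearMap.id := by
  suffices hs : ∀ (γ : PosReal) (c : ℂ),
      (mul' ℂ Rpos ∘ₗ sSec) (AddMonoidAlgebra.single γ c) = AddMonoidAlgebra.single γ c from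
    AddMonoidAlgebra.lhom_ext' fun γ => LinearMap.ext fun c => hs γ c
  intro γ c
  have h : half γ + half γ = γ := by ext; show γ.1/2 + γ.1/2 = γ.1; ring
  show mul' ℂ Rpos (sSec (AddMonoidAlgebra.single γ c)) = AddMonoidAlgebra.single γ c
  rw [sSec_single, map_smul, mul'_apply, AddMonoidAlgebra.single_mul_single, h, one_mul,
    AddMonoidAlgebra.smul_single', mul_one]

/-- The key relation: `t^m ⊗ t^m ≡ t^α ⊗ t^β` modulo `range barD`, where `m = (α+β)/2`. -/
lemma key (α β : PosReal) :
    (AddMonoidAlgebra.single (half (α+β)) 1 ⊗ₜ[ℂ] AddMonoidAlgebra.single (half (α+β)) 1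
      - AddMonoidAlgebra.single α (1:ℂ) ⊗ₜ[ℂ] AddMonoidAlgebra.single β (1:ℂ))
      ∈ LinearMap.range barD := by
  set m := half (α + β) with hm
  rcases lt_trichotomy α.1 β.1 with h | h | h
  · set y : PosReal := ⟨(β.1-α.1)/2, half_pos (sub_pos.2 h)⟩ with hy
    have h1 : α + y = m := by ext; rw [coe_add']; show _ = (α.1+β.1)/2; rw [hy]; ring
    have h2 : y + m = β := by ext; rw [coe_add']; show _ + (α.1+β.1)/2 = _; rw [hy]; ring
    refine ⟨AddMonoidAlgebra.single α 1 ⊗ₜ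
      (AddMonoidAlgebra.single y 1 ⊗ₜ AddMonoidAlgebra.single m 1), ?_⟩
    rw [barD_tmul, AddMonoidAlgebra.single_mul_single, AddMonoidAlgebra.single_mul_single,
      one_mul, h1, h2]
  · have : α = β := Subtype.ext h
    subst this
    have : m = α := by ext; show (α.1+α.1)/2 = α.1; ring
    rw [this, sub_self]
    exact zero_mem _
  · set y : PosReal := ⟨(α.1-β.1)/2, half_pos (sub_pos.2 h)⟩ with hy
    have h1 : m + y = α := by ext; rw [coe_add']; show (α.1+β.1)/2 + _ = _; rw [hy]; ring
    have h2 : y + β = m := by ext; rw [coe_add']; show _ = (α.1+β.1)/2; rw [hy]; ring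
    have hmem : (AddMonoidAlgebra.single α (1:ℂ) ⊗ₜ[ℂ] AddMonoidAlgebra.single β (1:ℂ)
        - AddMonoidAlgebra.single m 1 ⊗ₜ[ℂ] AddMonoidAlgebra.single m 1)
        ∈ LinearMap.range barD := by
      refine ⟨AddMonoidAlgebra.single m 1 ⊗ₜ
        (AddMonoidAlgebra.single y 1 ⊗ₜ AddMonoidAlgebra.single β 1), ?_⟩
      rw [barD_tmul, AddMonoidAlgebra.single_mul_single,
        AddMonoidAlgebra.single_mul_single, one_mul, h1, h2]
    rw [← neg_sub]
    exact neg_mem hmem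

/-- `sSec ∘ mul'` is the identity modulo `range barD`. -/
lemma mkQ_comp : (LinearMap.range barD).mkQ ∘ₗ (sSec ∘ₗ mul' ℂ Rpos - LinearMap.id) = 0 := by
  ext a b
  simp only [AlgebraTensorModule.curry_apply, curry_apply, coe_comp, coe_restrictScalars,
    Function.comp_apply, AddMonoidAlgebra.lsingle_apply, LinearMap.sub_apply, id_apply, mul'_apply,
    LinearMap.zero_apply, Submodule.mkQ_apply]
  rw [AddMonoidAlgebra.single_mul_single, one_mul, sSec_single, one_smul,
    Submodule.Quotient.mk_eq_zero]
  exact key a b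

/-- The ring `ℂ[t^α | 0 < α ∈ ℝ]` is quasi-unital: the canonical map
`R ⊗_R R → R` is an isomorphism. -/
theorem Rpos_quasiUnital :
    ∀ f : ((Rpos ⊗[ℂ] Rpos) ⧸ LinearMap.range barD) →ₗ[ℂ] Rpos,
      f ∘ₗ (LinearMap.range barD).mkQ = mul' ℂ Rpos → Function.Bijective f := by
  intro f hf
  have hfs : ∀ r : Rpos, f ((LinearMap.range barD).mkQ (sSec r)) = r := by
    intro r
    have := congrArg (fun g => g (sSec r)) hf
    simpa using this.trans (congrArg (mul' ℂ Rpos) rfl) |>.trans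
      (by rw [← comp_apply, mul'_comp_sSec, id_apply])
  have hmk : ∀ x : Rpos ⊗[ℂ] Rpos,
      (LinearMap.range barD).mkQ (sSec (mul' ℂ Rpos x)) = (LinearMap.range barD).mkQ x := by
    intro x
    have := congrArg (fun g => g x) mkQ_comp
    simp only [coe_comp, Function.comp_apply, LinearMap.sub_apply, id_apply, map_sub, LinearMap.zero_apply] at this
    exact sub_eq_zero.mp this
  constructor
  · intro u v huv
    obtain ⟨x, rfl⟩ := (LinearMap.range barD).mkQ_surjective u
    obtain ⟨y, rfl⟩ := (LinearMap.range barD).mkQ_surjective v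
    have hx : f ((LinearMap.range barD).mkQ x) = mul' ℂ Rpos x := by
      rw [← hf]; rfl
    have hy : f ((LinearMap.range barD).mkQ y) = mul' ℂ Rpos y := by
      rw [← hf]; rfl
    have : mul' ℂ Rpos x = mul' ℂ Rpos y := by rw [← hx, ← hy, huv]
    rw [← hmk x, ← hmk y, this]
  · intro r
    exact ⟨(LinearMap.range barD).mkQ (sSec r), hfs r⟩
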